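/- Let (K, T, w, A) be a WSC satisfying the exactly-two condition, and let w' be another weight function on the edges of K such that for every edge ab, either w'(ab) = w(ab) or w'(ab) = −w(ab). Then π₁(K, w, A) is isomorphic to π₁(K, w', A). -/

import Mathlib

open scoped Classical

variable {V : Type*}

/-- Generators of the weighted fundamental group: edges `ab` of `K` with `a < b`. -/
def WGen [LinearOrder V] (K : SimpleGraph V) : Type _ :=
  {p : V × V // p.1 < p.2 ∧ K.Adj p.1 p.2}

/-- The relators of the weighted fundamental group: (1) `g_{ab}^{w(ab)}` for edges of the
spanning tree `A`; (2) `g_{ab}^{w(ab)} · (g_{av}^{w(av)} · g_{vb}^{w(vb)})⁻¹` for 2-simplices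
`{a, v, b} ∈ T` with `a < v < b`. -/
def WRelators [LinearOrder V] (K : SimpleGraph V) (T : Set (Finset V))
    (w : Sym2 V → ℤ) (A : SimpleGraph V) : Set (FreeGroup (WGen K)) :=
  {r | ∃ e : WGen K, A.Adj e.1.1 e.1.2 ∧ r = FreeGroup.of e ^ w s(e.1.1, e.1.2)} ∪
  {r | ∃ (a v b : V) (hav : a < v) (hvb : v < b)
       (h1 : K.Adj a v) (h2 : K.Adj v b) (h3 : K.Adj a b),
       ({a, v, b} : Finset V) ∈ T ∧
       r = FreeGroup.of (⟨(a, b), hav.trans hvb, h3⟩ : WGen K) ^ w s(a, b) *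
         (FreeGroup.of (⟨(a, v), hav, h1⟩ : WGen K) ^ w s(a, v) *
          FreeGroup.of (⟨(v, b), hvb, h2⟩ : WGen K) ^ w s(v, b))⁻¹}

/-- The weighted fundamental group `π₁(K, w, A)` of the WSC `(K, T, w, A)`,
as a presented group. -/
def wpi1 [LinearOrder V] (K : SimpleGraph V) (T : Set (Finset V))
    (w : Sym2 V → ℤ) (A : SimpleGraph V) : Type _ :=
  PresentedGroup (WRelators K T w A)

noncomputable instance [LinearOrder V] (K : SimpleGraph V) (T : Set (Finset V))
    (w : Sym2 V → ℤ) (A : SimpleGraph V) : Group (wpi1 K T w A) := by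
  unfold wpi1; infer_instance

/-- `(K, T, w, A)` is a weighted simplicial complex: `K` is a connected simple graph,
`T` is a set of 2-simplices (unordered triples of distinct pairwise adjacent vertices),
and `A` is a spanning tree of `K`. -/
structure IsWSC (K : SimpleGraph V) (T : Set (Finset V))
    (w : Sym2 V → ℤ) (A : SimpleGraph V) : Prop where
  conn : K.Connected
  tri : ∀ t ∈ T, ∃ a v b : V, a ≠ v ∧ v ≠ b ∧ a ≠ b ∧ t = {a, v, b} ∧
        K.Adj a v ∧ K.Adj v b ∧ K.Adj a b
  tree : A.IsTree
  le : A ≤ K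

/-- Exactly two of the three edges of every 2-simplex of `T` lie in the tree `A`. -/
def ExactlyTwo [LinearOrder V] (T : Set (Finset V)) (A : SimpleGraph V) : Prop :=
  ∀ a v b : V, a < v → v < b → ({a, v, b} : Finset V) ∈ T →
    ((if A.Adj a b then 1 else 0) + (if A.Adj a v then 1 else 0) +
      (if A.Adj v b then 1 else 0) : ℕ) = 2

section Aux

variable [LinearOrder V]

/-- Sign comparing two weight functions on an edge. -/
noncomputable def wsign (K : SimpleGraph V) (w w' : Sym2 V → ℤ) (e : WGen K) : ℤ :=
  if w' s(e.1.1, e.1.2) = w s(e.1.1, e.1.2) then 1 else -1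

lemma wsign_mul_self (K : SimpleGraph V) (w w' : Sym2 V → ℤ) (e : WGen K) :
    wsign K w w' e * wsign K w w' e = 1 := by
  unfold wsign; split <;> norm_num

lemma wsign_symm (K : SimpleGraph V) (w w' : Sym2 V → ℤ) (e : WGen K) :
    wsign K w' w e = wsign K w w' e := by
  unfold wsign
  by_cases hww : w' s(e.1.1, e.1.2) = w s(e.1.1, e.1.2)
  · rw [if_pos hww, if_pos hww.symm]
  · rw [if_neg hww, if_neg (fun h => hww h.symm)]

lemma relone {K : SimpleGraph V} {T : Set (Finset V)} {w : Sym2 V → ℤ} {A : SimpleGraph V}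
    {r : FreeGroup (WGen K)} (hr : r ∈ WRelators K T w A) :
    PresentedGroup.mk (WRelators K T w A) r = 1 := by
  exact (QuotientGroup.eq_one_iff r).mpr (Subgroup.subset_normalClosure hr)

lemma wsign_mul_w {K : SimpleGraph V} {w w' : Sym2 V → ℤ}
    (hw' : ∀ a b : V, K.Adj a b → w' s(a, b) = w s(a, b) ∨ w' s(a, b) = -w s(a, b))
    (e : WGen K) : wsign K w w' e * w s(e.1.1, e.1.2) = w' s(e.1.1, e.1.2) := by
  unfold wsign
  split_ifs with h
  · rw [h]; ring
  · rcases hw' e.1.1 e.1.2 e.2.2 with h' | h'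
    · exact absurd h' h
    · rw [h']; ring

lemma wsign_mul_w' {K : SimpleGraph V} {w w' : Sym2 V → ℤ}
    (hw' : ∀ a b : V, K.Adj a b → w' s(a, b) = w s(a, b) ∨ w' s(a, b) = -w s(a, b))
    (e : WGen K) : wsign K w w' e * w' s(e.1.1, e.1.2) = w s(e.1.1, e.1.2) := by
  unfold wsign
  split_ifs with h
  · rw [h]; ring
  · rcases hw' e.1.1 e.1.2 e.2.2 with h' | h'
    · exact absurd h' h
    · rw [h']; ring

/-- The key construction: the sign-twisted map kills all relators. -/
lemma rels_lift {K : SimpleGraph V} {T : Set (Finset V)} {w w₂ : Sym2 V → ℤ} {A : SimpleGraph V}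
    (key : ∀ e : WGen K, wsign K w w₂ e * w s(e.1.1, e.1.2) = w₂ s(e.1.1, e.1.2)) :
    ∀ r ∈ WRelators K T w A,
      FreeGroup.lift (fun e : WGen K =>
        (PresentedGroup.of e : wpi1 K T w₂ A) ^ wsign K w w₂ e) r = 1 := by
  intro r hr
  rcases hr with ⟨e, hA, rfl⟩ | ⟨a, v, b, hav, hvb, h1, h2, h3, hT, rfl⟩
  · rw [map_zpow, FreeGroup.lift_apply_of, ← zpow_mul, mul_comm, ← mul_comm, key e]
    have : ((PresentedGroup.of e : wpi1 K T w₂ A)) ^ w₂ s(e.1.1, e.1.2) =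
        PresentedGroup.mk (WRelators K T w₂ A) (FreeGroup.of e ^ w₂ s(e.1.1, e.1.2)) := by
      rw [map_zpow]; rfl
    rw [this]
    exact relone (Or.inl ⟨e, hA, rfl⟩)
  · change FreeGroup.lift (fun e : WGen K => (PresentedGroup.of e : wpi1 K T w₂ A) ^ wsign K w w₂ e)
        (FreeGroup.of (α := WGen K) ⟨(a, b), hav.trans hvb, h3⟩ ^ w s(a, b) *
          (FreeGroup.of (α := WGen K) ⟨(a, v), hav, h1⟩ ^ w s(a, v) *
            FreeGroup.of (α := WGen K) ⟨(v, b), hvb, h2⟩ ^ w s(v, b))⁻¹) = 1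
    simp only [map_mul, map_inv, map_zpow, FreeGroup.lift_apply_of, ← zpow_mul]
    erw [FreeGroup.lift_apply_of, FreeGroup.lift_apply_of, FreeGroup.lift_apply_of]
    simp only [← zpow_mul]
    erw [mul_comm (wsign K w w₂ _), mul_comm (wsign K w w₂ _), mul_comm (wsign K w w₂ _)]
    erw [mul_comm (w s(a,b)), mul_comm (w s(a,v)), mul_comm (w s(v,b))]
    erw [key ⟨(a, b), hav.trans hvb, h3⟩, key ⟨(a, v), hav, h1⟩, key ⟨(v, b), hvb, h2⟩]
    have : (PresentedGroup.of (⟨(a, b), hav.trans hvb, h3⟩ : WGen K) : wpi1 K T w₂ A)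
          ^ w₂ s(a, b) *
        ((PresentedGroup.of (⟨(a, v), hav, h1⟩ : WGen K) : wpi1 K T w₂ A) ^ w₂ s(a, v) *
         (PresentedGroup.of (⟨(v, b), hvb, h2⟩ : WGen K) : wpi1 K T w₂ A) ^ w₂ s(v, b))⁻¹ =
        PresentedGroup.mk (WRelators K T w₂ A)
          (FreeGroup.of (⟨(a, b), hav.trans hvb, h3⟩ : WGen K) ^ w₂ s(a, b) *
           (FreeGroup.of (⟨(a, v), hav, h1⟩ : WGen K) ^ w₂ s(a, v) *
            FreeGroup.of (⟨(v, b), hvb, h2⟩ : WGen K) ^ w₂ s(v, b))⁻¹) := by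
      erw [map_mul, map_inv, map_mul, map_zpow, map_zpow, map_zpow]; rfl
    rw [this]
    exact relone (Or.inr ⟨a, v, b, hav, hvb, h1, h2, h3, hT, rfl⟩)

end Aux

/-- Corollary 2.9. If `(K, T, w, A)` satisfies the exactly-two condition and
`w'` agrees with `w` up to sign on every edge of `K`, then `π₁(K, w, A) ≅ π₁(K, w', A)`. -/
theorem weighted_pi1_sign_invariant [LinearOrder V] (K : SimpleGraph V) (T : Set (Finset V))
    (w w' : Sym2 V → ℤ) (A : SimpleGraph V) (hwsc : IsWSC K T w A) (h2 : ExactlyTwo T A)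
    (hw' : ∀ a b : V, K.Adj a b → w' s(a, b) = w s(a, b) ∨ w' s(a, b) = -w s(a, b)) :
    Nonempty (wpi1 K T w A ≃* wpi1 K T w' A) := by
  have hf := rels_lift (K := K) (T := T) (w := w) (w₂ := w') (A := A) (wsign_mul_w hw')
  have hg' : ∀ e : WGen K, wsign K w' w e * w' s(e.1.1, e.1.2) = w s(e.1.1, e.1.2) := by
    intro e
    rw [wsign_symm K w w' e]
    exact wsign_mul_w' hw' e
  have hg := rels_lift (K := K) (T := T) (w := w') (w₂ := w) (A := A) hg'
  let F : wpi1 K T w A →* wpi1 K T w' A := PresentedGroup.toGroup hf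
  let G : wpi1 K T w' A →* wpi1 K T w A := PresentedGroup.toGroup hg
  have hGF : G.comp F = MonoidHom.id (wpi1 K T w A) := by
    apply PresentedGroup.ext
    intro e
    show G (F (PresentedGroup.of e)) = PresentedGroup.of e
    erw [show F (PresentedGroup.of e) = _ from PresentedGroup.toGroup.of hf,
      map_zpow, show G (PresentedGroup.of e) = _ from PresentedGroup.toGroup.of hg,
      ← zpow_mul]
    have : wsign K w' w e = wsign K w w' e := wsign_symm K w w' e
    rw [this, wsign_mul_self]; exact zpow_one _
  have hFG : F.comp G = MonoidHom.id (wpi1 K T w' A) := by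
    apply PresentedGroup.ext
    intro e
    show F (G (PresentedGroup.of e)) = PresentedGroup.of e
    erw [show G (PresentedGroup.of e) = _ from PresentedGroup.toGroup.of hg,
      map_zpow, show F (PresentedGroup.of e) = _ from PresentedGroup.toGroup.of hf,
      ← zpow_mul]
    have : wsign K w w' e = wsign K w' w e := (wsign_symm K w w' e).symm
    rw [this, wsign_mul_self]; exact zpow_one _
  exact ⟨MonoidHom.toMulEquiv F G hGF hFG⟩
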